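/- Fix α ∈ (0,1), set C := 2^d, and fix P ∈ 𝒫. Assume (level) that for every S ∈ MI(P), limsup_{n→∞} P(φ_n(S, αC^{-1}) = 1) ≤ αC^{-1}, and (power) that for every S ⊆ {1, …, d} that is not a superset of any element of MI(P), lim_{n→∞} P(φ_n(S, αC^{-1}) = 0) = 0. For each n, let Î_n := {S ⊆ {1, …, d} : φ_n(S, αC^{-1}) = 0}, let M̂I_n be the collection of elements of Î_n that are minimal with respect to set inclusion, and let Ŝ_n := ⋃_{S ∈ M̂I_n} S. Then liminf_{n→∞} P(Ŝ_n = S_AS(P)) ≥ liminf_{n→∞} P(M̂I_n = MI(P)) ≥ 1 − α. -/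

import Mathlib

open MeasureTheory Filter

/-- The combined decision rule for testing minimal invariance:
`φ^MI_n(S, α) = 1` iff `φ_n(S, α) = 1` or `φ_n(S \ {j}, α) = 0` for some
`j ∈ S` (for `S = ∅` this reduces to `φ^MI_n(∅, α) = φ_n(∅, α)`). -/
def phiMI {Ω : Type*} {d : ℕ} (φ : ℕ → Set (Fin d) → ℝ → Ω → Prop)
    (n : ℕ) (S : Set (Fin d)) (α : ℝ) (ω : Ω) : Prop :=
  φ n S α ω ∨ ∃ j ∈ S, ¬ φ n (S \ {j}) α ω

/-- The null hypothesis of minimal invariance: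
`H^MI_{0,S} = H_{0,S} ∩ ⋂_{j ∈ S} (Pfam \ H_{0, S \ {j}})`. -/
def HMI0 {Ω : Type*} [MeasurableSpace Ω] {d : ℕ}
    (Pfam : Set (Measure Ω)) (H0 : Set (Fin d) → Set (Measure Ω))
    (S : Set (Fin d)) : Set (Measure Ω) :=
  H0 S ∩ ⋂ j ∈ S, (Pfam \ H0 (S \ {j}))

/-- The elements of a collection of subsets of `{1, …, d}` that are minimal
with respect to set inclusion. -/
def minimalSets {d : ℕ} (C : Set (Set (Fin d))) : Set (Set (Fin d)) :=
  {S | S ∈ C ∧ ∀ S' ∈ C, ¬ S' ⊂ S}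

/-- Auxiliary: limsup of a sum is at most the sum of the limsups (in `ℝ≥0∞`). -/
lemma limsup_add_le_atTop (u v : ℕ → ENNReal) :
    Filter.limsup (fun n => u n + v n) Filter.atTop
      ≤ Filter.limsup u Filter.atTop + Filter.limsup v Filter.atTop := by
  refine ENNReal.le_of_forall_pos_le_add fun ε hε hfin => ?_
  have hu : Filter.limsup u Filter.atTop ≠ ⊤ :=
    fun h => absurd hfin (by simp [h])
  have hv : Filter.limsup v Filter.atTop ≠ ⊤ :=
    fun h => absurd hfin (by simp [h])
  have hε2 : ((ε : ENNReal) / 2) ≠ 0 := by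
    simp [ENNReal.div_eq_top, hε.ne']
  have h1 : Filter.limsup u Filter.atTop
      < Filter.limsup u Filter.atTop + (ε : ENNReal) / 2 := ENNReal.lt_add_right hu hε2
  have h2 : Filter.limsup v Filter.atTop
      < Filter.limsup v Filter.atTop + (ε : ENNReal) / 2 := ENNReal.lt_add_right hv hε2
  refine Filter.limsup_le_of_le (by isBoundedDefault) ?_
  filter_upwards [Filter.eventually_lt_of_limsup_lt h1,
    Filter.eventually_lt_of_limsup_lt h2] with n hn1 hn2
  calc u n + v n
      ≤ (Filter.limsup u Filter.atTop + (ε : ENNReal) / 2)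
        + (Filter.limsup v Filter.atTop + (ε : ENNReal) / 2) := add_le_add hn1.le hn2.le
    _ = (Filter.limsup u Filter.atTop + Filter.limsup v Filter.atTop)
        + ((ε : ENNReal) / 2 + (ε : ENNReal) / 2) := by ring
    _ = Filter.limsup u Filter.atTop + Filter.limsup v Filter.atTop + (ε : ENNReal) := by
        rw [ENNReal.add_halves]

/-- Auxiliary: limsup of a finite sum is at most the sum of limsups (in `ℝ≥0∞`). -/
lemma limsup_finset_sum_le {ι : Type*} (s : Finset ι) (g : ι → ℕ → ENNReal) :
    Filter.limsup (fun n => ∑ i ∈ s, g i n) Filter.atTop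
      ≤ ∑ i ∈ s, Filter.limsup (g i) Filter.atTop := by
  classical
  induction s using Finset.induction_on with
  | empty => simp
  | @insert a s hi ih =>
    simp only [Finset.sum_insert hi]
    calc Filter.limsup (fun n => g a n + ∑ i ∈ s, g i n) Filter.atTop
        ≤ Filter.limsup (g a) Filter.atTop
            + Filter.limsup (fun n => ∑ i ∈ s, g i n) Filter.atTop :=
          limsup_add_le_atTop _ _
      _ ≤ _ := add_le_add le_rfl ih

/-- with `C = 2^d`, if `φ_n(·, α/C)` has asymptotic level
`α/C` for every minimally invariant set and asymptotic power against every
set that is not a superset of a minimally invariant set, then, with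
`Î_n = {S : φ_n(S, α/C) = 0}`, `M̂I_n` its inclusion-minimal elements and
`Ŝ_n = ⋃ M̂I_n`,
`liminf_n P(Ŝ_n = S_AS(P)) ≥ liminf_n P(M̂I_n = MI(P)) ≥ 1 - α`. -/
theorem IAS_consistency {Ω : Type*} [MeasurableSpace Ω]
    (Pfam : Set (Measure Ω)) (hprob : ∀ P ∈ Pfam, IsProbabilityMeasure P)
    (d : ℕ) (hd : 1 ≤ d)
    (φ : ℕ → Set (Fin d) → ℝ → Ω → Prop)
    (H0 : Set (Fin d) → Set (Measure Ω))
    (α : ℝ) (hα : α ∈ Set.Ioo (0 : ℝ) 1)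
    (P : Measure Ω) (hP : P ∈ Pfam)
    (level : ∀ S ∈ minimalSets {T : Set (Fin d) | P ∈ H0 T},
      limsup (fun n => P {ω | φ n S (α / 2 ^ d) ω}) atTop
        ≤ ENNReal.ofReal (α / 2 ^ d))
    (power : ∀ S : Set (Fin d),
      (¬ ∃ S' ∈ minimalSets {T : Set (Fin d) | P ∈ H0 T}, S' ⊆ S) →
      Tendsto (fun n => P {ω | ¬ φ n S (α / 2 ^ d) ω}) atTop (nhds 0)) :
    liminf (fun n =>
        P {ω | minimalSets {T : Set (Fin d) | ¬ φ n T (α / 2 ^ d) ω}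
            = minimalSets {T : Set (Fin d) | P ∈ H0 T}}) atTop
      ≤ liminf (fun n =>
        P {ω | ⋃₀ minimalSets {T : Set (Fin d) | ¬ φ n T (α / 2 ^ d) ω}
            = ⋃₀ minimalSets {T : Set (Fin d) | P ∈ H0 T}}) atTop ∧
    ENNReal.ofReal (1 - α) ≤
      liminf (fun n =>
        P {ω | minimalSets {T : Set (Fin d) | ¬ φ n T (α / 2 ^ d) ω}
            = minimalSets {T : Set (Fin d) | P ∈ H0 T}}) atTop := by
  classical
  haveI : IsProbabilityMeasure P := hprob P hP
  set c : ℝ := α / 2 ^ d with hcdef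
  set MI : Set (Set (Fin d)) := minimalSets {T : Set (Fin d) | P ∈ H0 T} with hMIdef
  constructor
  · refine liminf_le_liminf (Eventually.of_forall fun n => measure_mono fun ω hω => ?_)
    simp only [Set.mem_setOf_eq] at hω ⊢
    rw [hω]
  -- main part
  have hc0 : 0 ≤ c := div_nonneg hα.1.le (by positivity)
  -- "bad" sets: not a superset of any minimally invariant set
  set Bad : Set (Fin d) → Prop := fun S => ¬ ∃ S' ∈ MI, S' ⊆ S with hBaddef
  have hBadnotMI : ∀ S, Bad S → S ∉ MI := by
    intro S hS hSMI
    exact hS ⟨S, hSMI, subset_rfl⟩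
  -- key deterministic lemma
  have key : ∀ (n : ℕ) (ω : Ω), (∀ S ∈ MI, ¬ φ n S c ω) → (∀ S, Bad S → φ n S c ω) →
      minimalSets {T : Set (Fin d) | ¬ φ n T c ω} = MI := by
    intro n ω h1 h2
    ext S
    constructor
    · rintro ⟨hS, hmin⟩
      have hex : ∃ T ∈ MI, T ⊆ S := by
        by_contra h
        exact hS (h2 S h)
      obtain ⟨T, hT, hTS⟩ := hex
      have hTeq : T = S := by
        by_contra hne
        exact hmin T (h1 T hT) (hTS.ssubset_of_ne hne)
      exact hTeq ▸ hT
    · intro hSMI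
      refine ⟨h1 S hSMI, ?_⟩
      intro S' hS' hsub
      have hex : ∃ T ∈ MI, T ⊆ S' := by
        by_contra h
        exact hS' (h2 S' h)
      obtain ⟨T, hT, hTS'⟩ := hex
      exact hSMI.2 T hT.1 (lt_of_le_of_lt hTS' hsub)
  -- the union-bound events
  set F : Set (Fin d) → ℕ → Set Ω := fun S n =>
    if S ∈ MI then {ω | φ n S c ω} else if Bad S then {ω | ¬ φ n S c ω} else ∅ with hFdef
  have compl_sub : ∀ n, {ω | minimalSets {T : Set (Fin d) | ¬ φ n T c ω} = MI}ᶜ ⊆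
      ⋃ S : Set (Fin d), F S n := by
    intro n ω hω
    by_contra hcon
    simp only [Set.mem_iUnion, not_exists] at hcon
    apply hω
    refine key n ω ?_ ?_
    · intro S hS hφ
      have := hcon S
      rw [hFdef] at this
      simp only [if_pos hS] at this
      exact this hφ
    · intro S hS
      have := hcon S
      rw [hFdef] at this
      simp only [if_neg (hBadnotMI S hS), if_pos hS] at this
      exact not_not.mp this
  -- union bound for each n
  have hbound : ∀ n, P {ω | minimalSets {T : Set (Fin d) | ¬ φ n T c ω} = MI}ᶜ
      ≤ ∑ S : Set (Fin d), P (F S n) := by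
    intro n
    calc P {ω | minimalSets {T : Set (Fin d) | ¬ φ n T c ω} = MI}ᶜ
        ≤ P (⋃ S : Set (Fin d), F S n) := measure_mono (compl_sub n)
      _ ≤ ∑' S : Set (Fin d), P (F S n) := measure_iUnion_le _
      _ = ∑ S : Set (Fin d), P (F S n) := tsum_fintype _
  -- limsup of each individual event
  have hterm : ∀ S : Set (Fin d), limsup (fun n => P (F S n)) atTop ≤ ENNReal.ofReal c := by
    intro S
    by_cases hS : S ∈ MI
    · have : (fun n => P (F S n)) = fun n => P {ω | φ n S c ω} := by
        funext n; rw [hFdef]; simp [if_pos hS]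
      rw [this]
      exact level S hS
    · by_cases hS' : Bad S
      · have : (fun n => P (F S n)) = fun n => P {ω | ¬ φ n S c ω} := by
          funext n; rw [hFdef]; simp [if_neg hS, if_pos hS']
        rw [this, (power S hS').limsup_eq]
        exact zero_le
      · have : (fun n => P (F S n)) = fun _ => (0 : ENNReal) := by
          funext n; rw [hFdef]; simp [if_neg hS, if_neg hS']
        rw [this, limsup_const]
        exact zero_le
  -- sum bound
  have hcard : (Fintype.card (Set (Fin d)) : ENNReal) = 2 ^ d := by
    rw [Fintype.card_set, Fintype.card_fin]
    push_cast
    ring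
  have hofReal : (2 : ENNReal) ^ d * ENNReal.ofReal c = ENNReal.ofReal α := by
    have h2 : ((2 : ℝ) ^ d) ≠ 0 := by positivity
    have : α = (2 : ℝ) ^ d * c := by
      rw [hcdef]; field_simp
    rw [this, ENNReal.ofReal_mul (by positivity)]
    congr 1
    rw [ENNReal.ofReal_pow (by norm_num)]
    norm_num
  have hlimsup : limsup (fun n => P {ω | minimalSets {T : Set (Fin d) | ¬ φ n T c ω} = MI}ᶜ)
      atTop ≤ ENNReal.ofReal α := by
    calc limsup (fun n => P {ω | minimalSets {T : Set (Fin d) | ¬ φ n T c ω} = MI}ᶜ) atTop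
        ≤ limsup (fun n => ∑ S : Set (Fin d), P (F S n)) atTop :=
          limsup_le_limsup (Eventually.of_forall hbound)
      _ ≤ ∑ S : Set (Fin d), limsup (fun n => P (F S n)) atTop :=
          limsup_finset_sum_le _ _
      _ ≤ ∑ _S : Set (Fin d), ENNReal.ofReal c := Finset.sum_le_sum fun S _ => hterm S
      _ = (Fintype.card (Set (Fin d)) : ENNReal) * ENNReal.ofReal c := by
          rw [Finset.sum_const, Finset.card_univ, nsmul_eq_mul]
      _ = ENNReal.ofReal α := by rw [hcard, hofReal]
  -- lower bound on the probability of equality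
  have hone : ∀ n, (1 : ENNReal) -
      P {ω | minimalSets {T : Set (Fin d) | ¬ φ n T c ω} = MI}ᶜ
      ≤ P {ω | minimalSets {T : Set (Fin d) | ¬ φ n T c ω} = MI} := by
    intro n
    rw [tsub_le_iff_right]
    calc (1 : ENNReal) = P Set.univ := (measure_univ).symm
      _ = P ({ω | minimalSets {T : Set (Fin d) | ¬ φ n T c ω} = MI} ∪
            {ω | minimalSets {T : Set (Fin d) | ¬ φ n T c ω} = MI}ᶜ) := by
          rw [Set.union_compl_self]
      _ ≤ _ := measure_union_le _ _
  rw [le_liminf_iff]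
  intro b hb
  have hb1 : b < 1 - ENNReal.ofReal α := by
    rwa [ENNReal.ofReal_sub _ hα.1.le, ENNReal.ofReal_one] at hb
  have hb2 : ENNReal.ofReal α < 1 - b := by
    rw [lt_tsub_iff_right] at hb1 ⊢
    rwa [add_comm]
  have hev : ∀ᶠ n in atTop,
      P {ω | minimalSets {T : Set (Fin d) | ¬ φ n T c ω} = MI}ᶜ < 1 - b :=
    eventually_lt_of_limsup_lt (lt_of_le_of_lt hlimsup hb2)
  filter_upwards [hev] with n hn
  have hb3 : b < 1 - P {ω | minimalSets {T : Set (Fin d) | ¬ φ n T c ω} = MI}ᶜ := by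
    rw [lt_tsub_iff_right] at hn ⊢
    rwa [add_comm]
  exact lt_of_lt_of_le hb3 (hone n)
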